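/- Let γ ∈ (1,2] and suppose L : [0,∞) → (0,1] satisfies ∫_{L(λ)}^1 du/(u(1−u)^{(γ−1)/γ}) = γλ^{(γ−1)/γ} for all λ ≥ 0. Then L(λ)·exp(γλ^{(γ−1)/γ}) → e^{C_γ} as λ → ∞, where C_γ = ∫_0^1 u^{−1}((1−u)^{−(γ−1)/γ} − 1)du. -/

import Mathlib

open Real MeasureTheory intervalIntegral Filter Set

theorem stmt_16 (γ : ℝ) (hγ : 1 < γ) (hγ2 : γ ≤ 2)
    (L : ℝ → ℝ) (hL : ∀ lam : ℝ, 0 ≤ lam → L lam ∈ Set.Ioc (0 : ℝ) 1)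
    (hid : ∀ lam : ℝ, 0 ≤ lam →
      (∫ u in (L lam)..1, 1 / (u * (1 - u) ^ ((γ - 1) / γ))) =
        γ * lam ^ ((γ - 1) / γ))
    (C : ℝ)
    (hC : C = ∫ u in Set.Ioo (0 : ℝ) 1, u⁻¹ * ((1 - u) ^ (-((γ - 1) / γ)) - 1)) :
    Tendsto (fun lam : ℝ => L lam * Real.exp (γ * lam ^ ((γ - 1) / γ)))
      atTop (nhds (Real.exp C)) := by
  set α : ℝ := (γ - 1) / γ with hαdef
  have hγ0 : (0:ℝ) < γ := lt_trans one_pos hγ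
  have hα0 : 0 < α := div_pos (by linarith) hγ0
  have hα1 : α < 1 := by rw [hαdef, div_lt_one hγ0]; linarith
  set f : ℝ → ℝ := fun u => u⁻¹ * ((1 - u) ^ (-α) - 1) with hfdef
  -- measurability
  have hfc : ContinuousOn f (Ioo 0 1) := by
    apply ContinuousOn.mul
    · exact continuousOn_id.inv₀ (fun x hx => ne_of_gt hx.1)
    · refine ContinuousOn.sub ?_ continuousOn_const
      refine (continuousOn_const.sub continuousOn_id).rpow_const (fun x hx => Or.inl ?_)
      have : (0:ℝ) < 1 - x := by linarith [hx.2]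
      simpa using ne_of_gt this
  -- nonnegativity on Ioo 0 1
  have hf_nonneg : ∀ u ∈ Ioo (0:ℝ) 1, 0 ≤ f u := by
    intro u hu
    have h1u : (0:ℝ) < 1 - u := by linarith [hu.2]
    have h1 : (1:ℝ) ≤ (1 - u) ^ (-α) :=
      Real.one_le_rpow_of_pos_of_le_one_of_nonpos h1u (by linarith [hu.1]) (by linarith)
    have : (0:ℝ) ≤ (1 - u) ^ (-α) - 1 := by linarith
    exact mul_nonneg (inv_nonneg.2 hu.1.le) this
  -- integrability on (0, 1/2]
  have hint1 : IntegrableOn f (Ioc 0 (2:ℝ)⁻¹) := by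
    refine Integrable.mono' (integrable_const ((2:ℝ) ^ α))
      ((hfc.mono (fun x hx => ⟨hx.1, lt_of_le_of_lt hx.2 (by norm_num)⟩)).aestronglyMeasurable measurableSet_Ioc) ?_
    refine (ae_restrict_iff' measurableSet_Ioc).2 (ae_of_all _ ?_)
    intro u hu
    have hu0 : 0 < u := hu.1
    have hu2 : u ≤ 2⁻¹ := hu.2
    have ht0 : (0:ℝ) < 1 - u := by linarith
    have ht2 : (2:ℝ)⁻¹ ≤ 1 - u := by linarith
    have ht1 : (1:ℝ) - u ≤ 1 := by linarith
    have hpow_pos : (0:ℝ) < (1 - u) ^ α := Real.rpow_pos_of_pos ht0 α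
    have hne : (1 - u) ^ (-α) = ((1 - u) ^ α)⁻¹ := Real.rpow_neg ht0.le α
    -- (1-u)^(-α) ≤ 2^α
    have hb : (1 - u) ^ (-α) ≤ (2:ℝ) ^ α := by
      rw [hne]
      have : ((2:ℝ)⁻¹) ^ α ≤ (1 - u) ^ α :=
        Real.rpow_le_rpow (by norm_num) ht2 hα0.le
      have h2 : ((2:ℝ)⁻¹) ^ α = ((2:ℝ) ^ α)⁻¹ := Real.inv_rpow (by norm_num) α
      rw [h2] at this
      calc ((1 - u) ^ α)⁻¹ ≤ (((2:ℝ) ^ α)⁻¹)⁻¹ :=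
            inv_anti₀ (inv_pos.2 (Real.rpow_pos_of_pos two_pos α)) this
        _ = (2:ℝ) ^ α := inv_inv _
    -- 1 - (1-u)^α ≤ u
    have hmono : (1 - u) ^ (1:ℝ) ≤ (1 - u) ^ α :=
      Real.rpow_le_rpow_of_exponent_ge ht0 ht1 hα1.le
    rw [Real.rpow_one] at hmono
    have hsub : (1 - u) ^ (-α) - 1 ≤ (2:ℝ) ^ α * u := by
      have : (1 - u) ^ (-α) - 1 = (1 - u) ^ (-α) * (1 - (1 - u) ^ α) := by
        rw [hne]; field_simp
      rw [this]
      have h1 : 1 - (1 - u) ^ α ≤ u := by linarith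
      have h0 : 0 ≤ 1 - (1 - u) ^ α := by
        have : (1 - u) ^ α ≤ 1 := Real.rpow_le_one ht0.le ht1 hα0.le
        linarith
      exact mul_le_mul hb h1 h0 (Real.rpow_pos_of_pos two_pos α).le
    have hfnn : 0 ≤ f u := hf_nonneg u ⟨hu0, (by linarith)⟩
    rw [Real.norm_eq_abs, abs_of_nonneg hfnn]
    have h3 : u⁻¹ * ((1 - u) ^ (-α) - 1) ≤ u⁻¹ * ((2:ℝ) ^ α * u) :=
      mul_le_mul_of_nonneg_left hsub (inv_nonneg.2 hu0.le)
    have h4 : u⁻¹ * ((2:ℝ) ^ α * u) = (2:ℝ) ^ α := by field_simp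
    rw [h4] at h3
    exact h3
  -- integrability on (1/2, 1)
  have hint2 : IntegrableOn f (Ioo (2:ℝ)⁻¹ 1) := by
    have hri : IntervalIntegrable (fun x : ℝ => x ^ (-α)) volume 0 (2:ℝ)⁻¹ :=
      intervalIntegrable_rpow' (by linarith)
    have hri2 : IntervalIntegrable (fun x : ℝ => (1 - x) ^ (-α)) volume (2:ℝ)⁻¹ 1 := by
      have h := hri.comp_sub_left 1
      simp only [sub_zero] at h
      have h2 : (1:ℝ) - 2⁻¹ = 2⁻¹ := by norm_num
      rw [h2] at h
      exact h.symm
    have hg : IntegrableOn (fun x : ℝ => 2 * (1 - x) ^ (-α)) (Ioo (2:ℝ)⁻¹ 1) := by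
      exact ((hri2.const_mul 2).1).mono_set Ioo_subset_Ioc_self
    refine Integrable.mono' hg
      ((hfc.mono (fun x hx => ⟨lt_trans (by norm_num) hx.1, hx.2⟩)).aestronglyMeasurable measurableSet_Ioo) ?_
    refine (ae_restrict_iff' measurableSet_Ioo).2 (ae_of_all _ ?_)
    intro u hu
    have hu0 : (0:ℝ) < u := lt_trans (by norm_num) hu.1
    have ht0 : (0:ℝ) < 1 - u := by linarith [hu.2]
    have hfnn : 0 ≤ f u := hf_nonneg u ⟨hu0, hu.2⟩
    rw [Real.norm_eq_abs, abs_of_nonneg hfnn]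
    have h1 : u⁻¹ ≤ 2 := by
      rw [inv_le_comm₀ (by exact hu0) (by norm_num)]
      exact hu.1.le
    have h2 : (1 - u) ^ (-α) - 1 ≤ (1 - u) ^ (-α) := by linarith
    show u⁻¹ * ((1 - u) ^ (-α) - 1) ≤ 2 * (1 - u) ^ (-α)
    have h1u : (1:ℝ) ≤ (1 - u) ^ (-α) :=
      Real.one_le_rpow_of_pos_of_le_one_of_nonpos ht0 (by linarith [hu.1]) (by linarith)
    exact mul_le_mul h1 h2 (by linarith) (by norm_num)
  have hInt : IntegrableOn f (Ioo 0 1) := by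
    have : Ioo (0:ℝ) 1 = Ioc 0 (2:ℝ)⁻¹ ∪ Ioo (2:ℝ)⁻¹ 1 :=
      (Set.Ioc_union_Ioo_eq_Ioo (by norm_num) (by norm_num)).symm
    rw [this]
    exact hint1.union hint2
  have hIntIcc : IntegrableOn f (Icc 0 1) := by
    rwa [integrableOn_Icc_iff_integrableOn_Ioo]
  -- key identity
  have key : ∀ y ∈ Ioc (0:ℝ) 1,
      (∫ u in y..1, 1 / (u * (1 - u) ^ α)) = -Real.log y + ∫ t in y..1, f t := by
    intro y hy
    have h1 : IntervalIntegrable (fun u : ℝ => 1 / u) volume y 1 := by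
      apply ContinuousOn.intervalIntegrable
      apply continuousOn_const.div continuousOn_id
      intro x hx
      rw [uIcc_of_le hy.2] at hx
      exact ne_of_gt (lt_of_lt_of_le hy.1 hx.1)
    have h2 : IntervalIntegrable f volume y 1 := by
      apply IntegrableOn.intervalIntegrable
      rw [uIcc_of_le hy.2]
      exact hIntIcc.mono_set (Icc_subset_Icc hy.1.le le_rfl)
    have hcong : EqOn (fun u : ℝ => 1 / (u * (1 - u) ^ α))
        (fun u : ℝ => 1 / u + f u) (uIcc y 1) := by
      intro u hu
      rw [uIcc_of_le hy.2] at hu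
      have hu0 : 0 < u := lt_of_lt_of_le hy.1 hu.1
      rcases eq_or_lt_of_le hu.2 with rfl | hu1
      · simp only [hfdef]
        rw [sub_self, Real.zero_rpow (ne_of_gt hα0), Real.zero_rpow (ne_of_lt (neg_neg_iff_pos.2 hα0))]
        norm_num
      · have ht0 : (0:ℝ) < 1 - u := by linarith
        simp only [hfdef]
        rw [Real.rpow_neg ht0.le]
        have hp : ((1:ℝ) - u) ^ α ≠ 0 := ne_of_gt (Real.rpow_pos_of_pos ht0 α)
        field_simp
        ring
    rw [intervalIntegral.integral_congr hcong, intervalIntegral.integral_add h1 h2,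
      integral_one_div (by rw [uIcc_of_le hy.2]; intro h; exact absurd h.1 (not_le.2 hy.1))]
    rw [one_div, Real.log_inv]
  -- g and its properties
  set g : ℝ → ℝ := fun y => ∫ t in y..1, f t with hgdef
  have hgC : g 0 = C := by
    rw [hgdef]
    simp only
    rw [intervalIntegral.integral_of_le zero_le_one, MeasureTheory.integral_Ioc_eq_integral_Ioo]
    rw [hC]
  have hgle : ∀ y ∈ Ioc (0:ℝ) 1, g y ≤ C := by
    intro y hy
    rw [← hgC]
    simp only [hgdef]
    rw [intervalIntegral.integral_of_le hy.2, intervalIntegral.integral_of_le zero_le_one,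
      MeasureTheory.integral_Ioc_eq_integral_Ioo, MeasureTheory.integral_Ioc_eq_integral_Ioo]
    apply setIntegral_mono_set hInt
    · exact (ae_restrict_iff' measurableSet_Ioo).2 (ae_of_all _ hf_nonneg)
    · exact HasSubset.Subset.eventuallyLE (Set.Ioo_subset_Ioo hy.1.le le_rfl)
  have hcont : ContinuousOn g (Icc 0 1) := by
    have h := intervalIntegral.continuousOn_primitive_interval_left
      (f := f) (a := 0) (b := 1) (μ := volume)
      (by rwa [uIcc_of_le zero_le_one])
    rwa [uIcc_of_le zero_le_one] at h
  -- the exponent tends to infinity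
  have hexp : Tendsto (fun lam : ℝ => γ * lam ^ α) atTop atTop :=
    (tendsto_rpow_atTop hα0).const_mul_atTop hγ0
  -- L tends to 0
  have hub : ∀ lam : ℝ, 0 ≤ lam → L lam ≤ Real.exp (C - γ * lam ^ α) := by
    intro lam hlam
    have hLl := hL lam hlam
    have hk := key (L lam) hLl
    rw [hid lam hlam] at hk
    have hgl : g (L lam) ≤ C := hgle _ hLl
    have hlog : Real.log (L lam) ≤ C - γ * lam ^ α := by
      simp only [hgdef] at hgl
      linarith
    calc L lam = Real.exp (Real.log (L lam)) := (Real.exp_log hLl.1).symm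
      _ ≤ Real.exp (C - γ * lam ^ α) := Real.exp_le_exp.2 hlog
  have hL0 : Tendsto L atTop (nhds 0) := by
    have hubt : Tendsto (fun lam : ℝ => Real.exp (C - γ * lam ^ α)) atTop (nhds 0) := by
      apply Real.tendsto_exp_atBot.comp
      have : Tendsto (fun lam : ℝ => -(γ * lam ^ α)) atTop atBot :=
        tendsto_neg_atBot_iff.2 hexp
      simpa [sub_eq_add_neg] using tendsto_atBot_add_const_left atTop C this
    refine tendsto_of_tendsto_of_tendsto_of_le_of_le' tendsto_const_nhds hubt ?_ ?_
    · filter_upwards [eventually_ge_atTop (0:ℝ)] with lam hlam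
      exact (hL lam hlam).1.le
    · filter_upwards [eventually_ge_atTop (0:ℝ)] with lam hlam
      exact hub lam hlam
  have hLIcc : Tendsto L atTop (nhdsWithin 0 (Icc 0 1)) := by
    rw [tendsto_nhdsWithin_iff]
    refine ⟨hL0, ?_⟩
    filter_upwards [eventually_ge_atTop (0:ℝ)] with lam hlam
    exact ⟨(hL lam hlam).1.le, (hL lam hlam).2⟩
  have hgL : Tendsto (fun lam => g (L lam)) atTop (nhds C) := by
    have h0 : (0:ℝ) ∈ Icc (0:ℝ) 1 := by norm_num
    have := (hcont 0 h0).tendsto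
    rw [hgC] at this
    exact this.comp hLIcc
  have heq : ∀ᶠ lam in atTop,
      Real.exp (g (L lam)) = L lam * Real.exp (γ * lam ^ α) := by
    filter_upwards [eventually_ge_atTop (0:ℝ)] with lam hlam
    have hLl := hL lam hlam
    have hk := key (L lam) hLl
    rw [hid lam hlam] at hk
    have : g (L lam) = Real.log (L lam) + γ * lam ^ α := by
      simp only [hgdef]; linarith
    rw [this, Real.exp_add, Real.exp_log hLl.1]
  exact (((Real.continuous_exp.tendsto C).comp hgL)).congr' heq
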